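/- If S is an invertible square matrix over a field indexed by α ⊕ β, its inverse is T, and for every matrix M that is zero outside the α×α block, the conjugate S·M·T is also zero outside the α×α block (and similarly every matrix zero outside the β×β block conjugates to a matrix zero outside the β×β block), then the α×α block S₁₁ of S is invertible with inverse the α×α block T₁₁ of T. -/
import Mathlib


open Matrix

theorem stmt_9 {F : Type*} [Field F] {α β : Type*} [Fintype α] [Fintype β]
    [DecidableEq α] [DecidableEq β]
    (S T : Matrix (α ⊕ β) (α ⊕ β) F)
    (hST : S * T = 1) (hTS : T * S = 1)
    (hA : ∀ M : Matrix (α ⊕ β) (α ⊕ β) F,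
      (M.toBlocks₁₂ = 0 ∧ M.toBlocks₂₁ = 0 ∧ M.toBlocks₂₂ = 0) →
      ((S * M * T).toBlocks₁₂ = 0 ∧ (S * M * T).toBlocks₂₁ = 0 ∧
        (S * M * T).toBlocks₂₂ = 0))
    (hB : ∀ M : Matrix (α ⊕ β) (α ⊕ β) F,
      (M.toBlocks₁₁ = 0 ∧ M.toBlocks₁₂ = 0 ∧ M.toBlocks₂₁ = 0) →
      ((S * M * T).toBlocks₁₁ = 0 ∧ (S * M * T).toBlocks₁₂ = 0 ∧
        (S * M * T).toBlocks₂₁ = 0)) :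
    S.toBlocks₁₁ * T.toBlocks₁₁ = 1 ∧ T.toBlocks₁₁ * S.toBlocks₁₁ = 1 := by
  set M : Matrix (α ⊕ β) (α ⊕ β) F := fromBlocks 1 0 0 0 with hM
  set N : Matrix (α ⊕ β) (α ⊕ β) F := fromBlocks 0 0 0 1 with hN
  have hMN : M + N = 1 := by
    simp [hM, hN, fromBlocks_add, ← fromBlocks_one]
  have hNzero : (S * N * T).toBlocks₁₁ = 0 := by
    exact (hB N (by simp [hN, toBlocks_fromBlocks₁₁, toBlocks_fromBlocks₁₂,
      toBlocks_fromBlocks₂₁])).1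
  have hsum : (S * M * T).toBlocks₁₁ + (S * N * T).toBlocks₁₁ = 1 := by
    have : S * M * T + S * N * T = 1 := by
      rw [← add_mul, ← mul_add, hMN, mul_one, hST]
    have h := congrArg toBlocks₁₁ this
    have hadd : (S * M * T + S * N * T).toBlocks₁₁
        = (S * M * T).toBlocks₁₁ + (S * N * T).toBlocks₁₁ := rfl
    have hone : (1 : Matrix (α ⊕ β) (α ⊕ β) F).toBlocks₁₁ = 1 := by
      ext i j
      simp [toBlocks₁₁, one_apply]
    rw [hadd, hone] at h
    exact h
  have hMcalc : (S * M * T).toBlocks₁₁ = S.toBlocks₁₁ * T.toBlocks₁₁ := by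
    nth_rewrite 1 [← fromBlocks_toBlocks S, ← fromBlocks_toBlocks T]
    simp [hM, fromBlocks_multiply, toBlocks_fromBlocks₁₁]
  have h1 : S.toBlocks₁₁ * T.toBlocks₁₁ = 1 := by
    rw [← hMcalc]
    simpa [hNzero] using hsum
  exact ⟨h1, mul_eq_one_comm.mp h1⟩
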